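/- Let A be a unital C*-algebra faithfully represented on a Hilbert space K via ρ, let γ : B(K) → B(K) be a unital completely positive map, and let E : B(K) → B(K) be a unital completely positive map with range containing ρ(A). Suppose E(γ(ρ(a))) = ρ(a) for all a ∈ A. Then for all a ∈ A, E(γ(ρ(a))* γ(ρ(a))) = E(γ(ρ(a)))* E(γ(ρ(a))); consequently every element of γ(ρ(A)) lies in the multiplicative domain of E. -/

import Mathlib

open scoped InnerProductSpace

/-- A matrix over a star ring is "star positive" if it factors as `Nᴴ * N`.
In a C*-algebra `Mₙ(A)` this is exactly positivity. -/
def MatStarPos {R : Type*} [Ring R] [StarRing R] {n : ℕ}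
    (M : Matrix (Fin n) (Fin n) R) : Prop :=
  ∃ N : Matrix (Fin n) (Fin n) R, M = N.conjTranspose * N

/-- A unital completely positive map between complex star algebras. -/
structure IsUCP {A B : Type*} [Ring A] [StarRing A] [Algebra ℂ A]
    [Ring B] [StarRing B] [Algebra ℂ B] (φ : A → B) : Prop where
  linear : IsLinearMap ℂ φ
  unital : φ 1 = 1
  cp : ∀ (n : ℕ) (M : Matrix (Fin n) (Fin n) A), MatStarPos M → MatStarPos (M.map φ)


section Aux

variable {K : Type*} [NormedAddCommGroup K] [InnerProductSpace ℂ K] [CompleteSpace K]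

/-- The canonical 2×2 Schwarz test matrix is star-positive. -/
lemma schwarzMat_pos {R : Type*} [Ring R] [StarRing R] (x : R) :
    MatStarPos (!![1, x; star x, star x * x]) := by
  refine ⟨!![1, x; 0, 0], ?_⟩
  ext i j : 2
  fin_cases i <;> fin_cases j <;>
    simp [Matrix.mul_apply, Fin.sum_univ_two, Matrix.conjTranspose_apply]

/-- Quadratic form of `Pᴴ * P` is a sum of squared norms. -/
lemma quad_eq {n : ℕ} (P : Matrix (Fin n) (Fin n) (K →L[ℂ] K)) (v : Fin n → K) :
    ∑ i, ∑ j, ⟪((P.conjTranspose * P) i j) (v j), v i⟫_ℂ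
      = ∑ k, ((‖∑ j, (P k j) (v j)‖ : ℂ)) ^ 2 := by
  have h1 : ∀ i j, ((P.conjTranspose * P) i j) (v j)
      = ∑ k, (ContinuousLinearMap.adjoint (P k i)) ((P k j) (v j)) := by
    intro i j
    simp [Matrix.mul_apply, Matrix.conjTranspose_apply, ContinuousLinearMap.star_eq_adjoint,
      ContinuousLinearMap.sum_apply, ContinuousLinearMap.mul_apply]
  calc ∑ i, ∑ j, ⟪((P.conjTranspose * P) i j) (v j), v i⟫_ℂ
      = ∑ i, ∑ j, ∑ k, ⟪(P k j) (v j), (P k i) (v i)⟫_ℂ := by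
        refine Finset.sum_congr rfl fun i _ => Finset.sum_congr rfl fun j _ => ?_
        rw [h1, sum_inner]
        exact Finset.sum_congr rfl fun k _ => ContinuousLinearMap.adjoint_inner_left _ _ _
    _ = ∑ i, ∑ k, ∑ j, ⟪(P k j) (v j), (P k i) (v i)⟫_ℂ := by
        exact Finset.sum_congr rfl fun i _ => Finset.sum_comm
    _ = ∑ k, ∑ i, ∑ j, ⟪(P k j) (v j), (P k i) (v i)⟫_ℂ := Finset.sum_comm
    _ = ∑ k, ⟪∑ j, (P k j) (v j), ∑ i, (P k i) (v i)⟫_ℂ := by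
        refine Finset.sum_congr rfl fun k _ => ?_
        rw [inner_sum]
        exact Finset.sum_congr rfl fun i _ => (sum_inner _ _ _).symm
    _ = ∑ k, ((‖∑ j, (P k j) (v j)‖ : ℂ)) ^ 2 := by
        exact Finset.sum_congr rfl fun k _ => inner_self_eq_norm_sq_to_K _

/-- UCP maps on `B(K)` are star-preserving. -/
lemma IsUCP.map_star' {φ : (K →L[ℂ] K) → (K →L[ℂ] K)} (hφ : IsUCP φ)
    (x : K →L[ℂ] K) : φ (star x) = star (φ x) := by
  obtain ⟨P, hP⟩ := hφ.cp 2 _ (schwarzMat_pos x)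
  have hsa : ((!![1, x; star x, star x * x]).map φ).conjTranspose
      = (!![1, x; star x, star x * x]).map φ := by
    rw [hP, Matrix.conjTranspose_mul, Matrix.conjTranspose_conjTranspose]
  have h2 := Matrix.ext_iff.mpr hsa 1 0
  simp only [Matrix.conjTranspose_apply, Matrix.map_apply] at h2
  have h3 : star ((!![1, x; star x, star x * x]) 0 1)
      = (!![1, x; star x, star x * x] : Matrix (Fin 2) (Fin 2) (K →L[ℂ] K)) 1 0 := by
    simp
  rw [show ((!![1, x; star x, star x * x]) 0 1 : K →L[ℂ] K) = x by simp,
    show ((!![1, x; star x, star x * x]) 1 0 : K →L[ℂ] K) = star x by simp] at h2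
  exact h2.symm

/-- The Kadison–Schwarz inequality for UCP maps on `B(K)`. -/
lemma IsUCP.schwarz {φ : (K →L[ℂ] K) → (K →L[ℂ] K)} (hφ : IsUCP φ)
    (x : K →L[ℂ] K) : star (φ x) * φ x ≤ φ (star x * x) := by
  rw [ContinuousLinearMap.le_def, ContinuousLinearMap.isPositive_iff_complex]
  intro η
  obtain ⟨P, hP⟩ := hφ.cp 2 _ (schwarzMat_pos x)
  set v : Fin 2 → K := ![-((φ x) η), η] with hv
  have hadj : ∀ (T : K →L[ℂ] K) (u w : K), ⟪(star T) u, w⟫_ℂ = ⟪u, T w⟫_ℂ := fun T u w => by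
    rw [ContinuousLinearMap.star_eq_adjoint, ContinuousLinearMap.adjoint_inner_left]
  have key : ⟪(φ (star x * x) - star (φ x) * φ x) η, η⟫_ℂ
      = ∑ k, ((‖∑ j, (P k j) (v j)‖ : ℂ)) ^ 2 := by
    have e00 : (!![1, x; star x, star x * x] : Matrix (Fin 2) (Fin 2) (K →L[ℂ] K)) 0 0 = 1 := by
      simp
    have e01 : (!![1, x; star x, star x * x] : Matrix (Fin 2) (Fin 2) (K →L[ℂ] K)) 0 1 = x := by
      simp
    have e10 : (!![1, x; star x, star x * x] : Matrix (Fin 2) (Fin 2) (K →L[ℂ] K)) 1 0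
        = star x := by simp
    have e11 : (!![1, x; star x, star x * x] : Matrix (Fin 2) (Fin 2) (K →L[ℂ] K)) 1 1
        = star x * x := by simp
    rw [← quad_eq, ← hP]
    simp only [Fin.sum_univ_two, Matrix.map_apply, hv, e00, e01, e10, e11,
      Matrix.cons_val_zero, Matrix.cons_val_one, Matrix.head_cons,
      hφ.unital, hφ.map_star', ContinuousLinearMap.one_apply,
      ContinuousLinearMap.sub_apply, ContinuousLinearMap.mul_apply, inner_sub_left,
      inner_neg_left, inner_neg_right, hadj]
    ring
  have key' : ⟪(φ (star x * x) - star (φ x) * φ x) η, η⟫_ℂ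
      = ((∑ k, ‖∑ j, (P k j) (v j)‖ ^ 2 : ℝ) : ℂ) := by
    rw [key]; push_cast; ring
  have hre : ∀ r : ℝ, RCLike.re ((r : ℂ)) = r := fun r => by simp
  constructor
  · rw [key', hre]
  · rw [key', hre]; positivity

/-- Positivity of UCP maps on `B(K)`, as monotonicity. -/
lemma IsUCP.mono {φ : (K →L[ℂ] K) → (K →L[ℂ] K)} (hφ : IsUCP φ)
    {y z : K →L[ℂ] K} (h : y ≤ z) : φ y ≤ φ z := by
  have h0 : 0 ≤ z - y := sub_nonneg.2 h
  have hsq : z - y = star (CFC.sqrt (z - y)) * CFC.sqrt (z - y) := by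
    rw [(IsSelfAdjoint.of_nonneg (CFC.sqrt_nonneg (a := z - y))).star_eq,
      CFC.sqrt_mul_sqrt_self (z - y) h0]
  have hpos : MatStarPos (!![z - y]) := by
    refine ⟨!![CFC.sqrt (z - y)], ?_⟩
    refine Matrix.ext_iff.mp fun i j => ?_
    obtain rfl : i = 0 := Subsingleton.elim _ _
    obtain rfl : j = 0 := Subsingleton.elim _ _
    simp only [Matrix.mul_apply, Matrix.conjTranspose_apply, Fin.sum_univ_one,
      Matrix.of_apply, Matrix.cons_val', Matrix.cons_val_zero, Matrix.empty_val',
      Matrix.cons_val_fin_one]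
    exact hsq
  obtain ⟨P, hP⟩ := hφ.cp 1 _ hpos
  have h2 : φ (z - y) = star (P 0 0) * P 0 0 := by
    have h := Matrix.ext_iff.mpr hP 0 0
    simpa only [Matrix.mul_apply, Matrix.map_apply, Matrix.conjTranspose_apply,
      Fin.sum_univ_one, Matrix.cons_val_fin_one, Matrix.of_apply, Matrix.cons_val',
      Matrix.cons_val_zero, Matrix.empty_val'] using h
  have h3 : 0 ≤ φ (z - y) := h2 ▸ star_mul_self_nonneg _
  rwa [hφ.linear.map_sub, sub_nonneg] at h3

end Aux

theorem stmt5 {A : Type*} [CStarAlgebra A]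
    {K : Type*} [NormedAddCommGroup K] [InnerProductSpace ℂ K] [CompleteSpace K]
    (ρ : A →⋆ₐ[ℂ] (K →L[ℂ] K)) (hρ : Function.Injective ρ)
    (γ E : (K →L[ℂ] K) → (K →L[ℂ] K)) (hγ : IsUCP γ) (hE : IsUCP E)
    (hrange : ∀ a : A, ρ a ∈ Set.range E)
    (hfix : ∀ a : A, E (γ (ρ a)) = ρ a) :
    ∀ a : A,
      E (star (γ (ρ a)) * γ (ρ a)) = star (E (γ (ρ a))) * E (γ (ρ a)) ∧
      E (γ (ρ a) * star (γ (ρ a))) = E (γ (ρ a)) * star (E (γ (ρ a))) := by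
  have hx : ∀ b : A, E (star (γ (ρ b)) * γ (ρ b)) = star (E (γ (ρ b))) * E (γ (ρ b)) := by
    intro b
    set x := γ (ρ b) with hxdef
    have h1 : star (E x) * E x ≤ E (star x * x) := hE.schwarz x
    have h2' : star x * x ≤ γ (ρ (star b * b)) := by
      rw [map_mul, map_star]; exact hγ.schwarz (ρ b)
    have h5 : ρ (star b * b) = star (E x) * E x := by
      rw [map_mul, map_star, hfix b]
    have hup : E (star x * x) ≤ star (E x) * E x :=
      calc E (star x * x) ≤ E (γ (ρ (star b * b))) := hE.mono h2'
        _ = star (E x) * E x := by rw [hfix, h5]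
    exact le_antisymm hup h1
  intro a
  refine ⟨hx a, ?_⟩
  have h := hx (star a)
  have hxx : γ (ρ (star a)) = star (γ (ρ a)) := by rw [map_star, hγ.map_star']
  rw [hxx, star_star] at h
  have hEs : E (star (γ (ρ a))) = star (E (γ (ρ a))) := by
    rw [← hγ.map_star', ← map_star, hfix, map_star, hfix a]
  rw [hEs, star_star] at h
  exact h
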